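/- Let X be a complex Banach space and let A be a closed unbounded linear operator in X (a linear map from a subspace Dom(A) ⊆ X to X whose graph is closed in X × X). Suppose A has a left approximate inverse, i.e. there exist a bounded (continuous) linear operator R on X and a compact linear operator K on X such that R(A x) = x + K x for every x ∈ Dom(A). Then the range Ran(A) is a closed subspace of X and the kernel Ker(A) is finite-dimensional. -/

import Mathlib

open Filter Metric Topology Set

/-- A closed unbounded operator in a Banach space admitting a left approximate inverse
(`R A = I + K` with `R` bounded and `K` compact) has closed range and
finite-dimensional kernel. -/
theorem closedRange_and_finiteDimensional_ker_of_left_approx_inverse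
    (X : Type*) [NormedAddCommGroup X] [NormedSpace ℂ X] [CompleteSpace X]
    (A : X →ₗ.[ℂ] X) (hA : A.IsClosed)
    (R K : X →L[ℂ] X) (hK : IsCompactOperator K)
    (h : ∀ x : A.domain, R (A x) = (x : X) + K (x : X)) :
    IsClosed ((LinearMap.range A.toFun : Submodule ℂ X) : Set X) ∧
    FiniteDimensional ℂ (LinearMap.ker A.toFun) := by
  classical
  set N : Submodule ℂ X := (LinearMap.ker A.toFun).map A.domain.subtype with hNdef
  have hmemN : ∀ x : X, x ∈ N ↔ ∃ e : A.domain, A e = 0 ∧ (e : X) = x := by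
    intro x
    simp only [hNdef, Submodule.mem_map, LinearMap.mem_ker, Submodule.coe_subtype,
      LinearPMap.toFun_eq_coe]
  -- the kernel (as a subspace of X) is closed
  have hNclosed : IsClosed (N : Set X) := by
    have hset : (N : Set X) = (fun x : X => (x, (0 : X))) ⁻¹' (A.graph : Set (X × X)) := by
      ext x
      simp only [Set.mem_preimage, SetLike.mem_coe, LinearPMap.mem_graph_iff, hmemN,
        Prod.mk.injEq]
      constructor
      · rintro ⟨e, he0, rfl⟩; exact ⟨e, rfl, he0⟩
      · rintro ⟨e, rfl, he0⟩; exact ⟨e, he0, rfl⟩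
    rw [hset]
    exact hA.preimage (continuous_id.prodMk continuous_const)
  -- elements of the kernel satisfy x = -K x
  have hNfix : ∀ x ∈ N, x = -(K x) := by
    intro x hx
    rcases (hmemN x).1 hx with ⟨e, he0, rfl⟩
    have h' := h e
    rw [he0, map_zero] at h'
    exact eq_neg_of_add_eq_zero_left h'.symm
  -- the kernel is finite dimensional
  have hcompN : IsCompact (closure ((fun x => -(K x)) '' closedBall (0 : X) 1)) := by
    have := (hK.neg).isCompact_closure_image_closedBall (f := (-K : X →L[ℂ] X).toLinearMap)
    simpa using this 1
  have hSN : IsCompact ((N : Set X) ∩ closedBall (0 : X) 1) := by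
    apply hcompN.of_isClosed_subset (hNclosed.inter Metric.isClosed_closedBall)
    rintro x ⟨hxN, hx1⟩
    exact subset_closure ⟨x, hx1, (hNfix x hxN).symm⟩
  have hfinN : FiniteDimensional ℂ N := by
    apply FiniteDimensional.of_isCompact_closedBall₀ (𝕜 := ℂ) one_pos
      (r := 1)
    have himg : (Subtype.val '' (closedBall (0 : N) 1) : Set X)
        = (N : Set X) ∩ closedBall (0 : X) 1 := by
      ext x
      constructor
      · rintro ⟨y, hy, rfl⟩
        refine ⟨y.2, ?_⟩
        simpa [mem_closedBall, dist_eq_norm] using hy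
      · rintro ⟨hxN, hx⟩
        exact ⟨⟨x, hxN⟩, by simpa [mem_closedBall, dist_eq_norm] using hx, rfl⟩
    rw [Topology.IsEmbedding.subtypeVal.isCompact_iff, himg]
    exact hSN
  have hker : FiniteDimensional ℂ (LinearMap.ker A.toFun) := by
    have e := Submodule.equivMapOfInjective A.domain.subtype
      (Submodule.injective_subtype _) (LinearMap.ker A.toFun)
    exact Module.Finite.equiv e.symm
  refine ⟨?_, hker⟩
  -- now the range
  -- x = R (A x) - K x on the domain
  have hid : ∀ e : A.domain, (e : X) = R (A e) - K e := fun e =>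
    eq_sub_iff_add_eq.mpr (h e).symm
  -- limits of graph sequences are in the graph
  have hgraph_lim : ∀ (u : ℕ → A.domain) (x yy : X),
      Filter.Tendsto (fun n => ((u n : X))) atTop (nhds x) →
      Filter.Tendsto (fun n => A (u n)) atTop (nhds yy) → (x, yy) ∈ A.graph := by
    intro u x yy hu hv
    have htend : Filter.Tendsto (fun n => (((u n : X)), A (u n))) atTop (nhds (x, yy)) :=
      hu.prodMk_nhds hv
    exact hA.mem_of_tendsto htend (Filter.Eventually.of_forall fun n => A.mem_graph (u n))
  apply isClosed_of_closure_subset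
  intro y hy
  rcases mem_closure_iff_seq_limit.1 hy with ⟨y', hy'mem, hy'lim⟩
  simp only [SetLike.mem_coe, LinearMap.mem_range] at hy'mem
  choose d hd using hy'mem
  have hd' : ∀ n, A (d n) = y' n := hd
  -- adjust each d n by a kernel element to be almost distance-minimizing
  have hadj : ∀ n : ℕ, ∃ e : A.domain, A e = 0 ∧
      dist ((d n : X)) (e : X) < infDist ((d n : X)) (N : Set X) + 1 / (n + 1) := by
    intro n
    have hne : (N : Set X).Nonempty := ⟨0, N.zero_mem⟩
    have hlt : infDist ((d n : X)) (N : Set X)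
        < infDist ((d n : X)) (N : Set X) + 1 / (n + 1) := by
      have : (0 : ℝ) < 1 / (n + 1) := by positivity
      linarith
    rcases (infDist_lt_iff hne).1 hlt with ⟨k, hkN, hk⟩
    rcases (hmemN k).1 hkN with ⟨e, he0, rfl⟩
    exact ⟨e, he0, hk⟩
  choose e he0 hedist using hadj
  set d' : ℕ → A.domain := fun n => d n - e n with hd'def
  have hAd' : ∀ n, A (d' n) = y' n := by
    intro n
    rw [hd'def]
    rw [A.map_sub, he0, sub_zero]
    exact hd' n
  have heN : ∀ n, ((e n : X)) ∈ N := fun n => (hmemN _).2 ⟨e n, he0 n, rfl⟩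
  -- the almost-minimality property
  have hP : ∀ (n : ℕ), ∀ m ∈ N, ‖((d' n : X))‖ ≤ ‖((d' n : X)) - m‖ + 1 / (n + 1) := by
    intro n m hm
    have h1 : ‖((d' n : X))‖ = dist ((d n : X)) ((e n : X)) := by
      rw [hd'def, dist_eq_norm]; norm_cast
    have h2 : infDist ((d n : X)) (N : Set X) ≤ dist ((d n : X)) (((e n : X)) + m) :=
      infDist_le_dist_of_mem (N.add_mem (heN n) hm)
    have h3 : dist ((d n : X)) (((e n : X)) + m) = ‖((d' n : X)) - m‖ := by
      rw [dist_eq_norm, hd'def]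
      push_cast
      rw [sub_add_eq_sub_sub]
    have := hedist n
    rw [h1]
    rw [h3] at h2
    linarith
  -- the adjusted sequence is bounded
  have hbdd : ∃ M : ℝ, ∀ n, ‖((d' n : X))‖ ≤ M := by
    by_contra hcon
    push_neg at hcon
    -- select a subsequence with norms going to infinity
    have hsel : ∀ k : ℕ, ∃ n, k ≤ n ∧ (k : ℝ) < ‖((d' n : X))‖ := by
      intro k
      obtain ⟨B, hB⟩ : ∃ B : ℝ, ∀ i < k, ‖((d' i : X))‖ ≤ B := by
        induction k with
        | zero => exact ⟨0, fun i hi => by omega⟩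
        | succ k ih =>
          obtain ⟨B, hB⟩ := ih
          exact ⟨max B ‖((d' k : X))‖, fun i hi => by
            rcases Nat.lt_succ_iff_lt_or_eq.1 hi with hi | rfl
            · exact (hB i hi).trans (le_max_left _ _)
            · exact le_max_right _ _⟩
      obtain ⟨n, hn⟩ := hcon (max (k : ℝ) B)
      refine ⟨n, ?_, lt_of_le_of_lt (le_max_left _ _) hn⟩
      by_contra hnk
      push_neg at hnk
      exact absurd ((hB n hnk).trans (le_max_right _ _)) (not_le.2 hn)
    choose φ hφ1 hφ2 using hsel
    set c : ℕ → ℝ := fun k => ‖((d' (φ k) : X))‖ with hcdef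
    have hcpos : ∀ k, 0 < c k := fun k => lt_of_le_of_lt (Nat.cast_nonneg k) (hφ2 k)
    have hctop : Filter.Tendsto c atTop atTop :=
      tendsto_atTop_mono (fun k => (hφ2 k).le) tendsto_natCast_atTop_atTop
    have hφtop : Filter.Tendsto φ atTop atTop :=
      tendsto_atTop_mono hφ1 tendsto_id
    set uD : ℕ → A.domain := fun k => (((c k)⁻¹ : ℝ) : ℂ) • d' (φ k) with huDdef
    have huval : ∀ k, ((uD k : X)) = (((c k)⁻¹ : ℝ) : ℂ) • ((d' (φ k) : X)) := fun k => rfl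
    have hunorm : ∀ k, ‖((uD k : X))‖ = 1 := by
      intro k
      rw [huval, norm_smul, Complex.norm_real, Real.norm_eq_abs, abs_inv,
        abs_of_pos (hcpos k)]
      exact inv_mul_cancel₀ (hcpos k).ne'
    -- A applied to uD tends to 0
    have hAuD : ∀ k, A (uD k) = (((c k)⁻¹ : ℝ) : ℂ) • y' (φ k) := by
      intro k
      rw [huDdef]
      rw [A.map_smul, hAd']
    have hAuDlim : Filter.Tendsto (fun k => A (uD k)) atTop (nhds 0) := by
      have h1 : Filter.Tendsto (fun k => (c k)⁻¹) atTop (nhds 0) :=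
        hctop.inv_tendsto_atTop
      have h2 : Filter.Tendsto (fun k => y' (φ k)) atTop (nhds y) :=
        hy'lim.comp hφtop
      have h3 : Filter.Tendsto (fun k => (c k)⁻¹ • y' (φ k)) atTop (nhds ((0 : ℝ) • y)) :=
        h1.smul h2
      rw [zero_smul] at h3
      have : (fun k => A (uD k)) = fun k => (c k)⁻¹ • y' (φ k) := by
        funext k
        rw [hAuD k, Complex.coe_smul]
      rw [this]
      exact h3
    -- extract a convergent subsequence of K (uD k)
    have hKcomp : IsCompact (closure ((fun x => K x) '' closedBall (0 : X) 1)) := by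
      have := hK.isCompact_closure_image_closedBall (f := (K : X →L[ℂ] X).toLinearMap)
      simpa using this 1
    have hmemK : ∀ k, K ((uD k : X)) ∈ closure ((fun x => K x) '' closedBall (0 : X) 1) := by
      intro k
      exact subset_closure ⟨(uD k : X), by simp [mem_closedBall, dist_eq_norm, hunorm k], rfl⟩
    obtain ⟨z, _, ψ, hψmono, hψlim⟩ := hKcomp.tendsto_subseq hmemK
    -- uD ∘ ψ converges to w := -z
    have hulim : Filter.Tendsto (fun j => ((uD (ψ j) : X))) atTop (nhds (-z)) := by
      have hrw : (fun j => ((uD (ψ j) : X)))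
          = fun j => R (A (uD (ψ j))) - K ((uD (ψ j) : X)) := by
        funext j; exact hid (uD (ψ j))
      rw [hrw]
      have h1 : Filter.Tendsto (fun j => R (A (uD (ψ j)))) atTop (nhds (R 0)) :=
        (R.continuous.tendsto 0).comp (hAuDlim.comp hψmono.tendsto_atTop)
      rw [map_zero] at h1
      have := h1.sub hψlim
      rwa [zero_sub] at this
    have hwnorm : ‖(-z : X)‖ = 1 := by
      have h1 : Filter.Tendsto (fun j => ‖((uD (ψ j) : X))‖) atTop (nhds ‖(-z : X)‖) :=
        (continuous_norm.tendsto _).comp hulim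
      have h2 : Filter.Tendsto (fun _ : ℕ => (1 : ℝ)) atTop (nhds 1) := tendsto_const_nhds
      have : (fun j => ‖((uD (ψ j) : X))‖) = fun _ : ℕ => (1 : ℝ) := by
        funext j; exact hunorm (ψ j)
      rw [this] at h1
      exact tendsto_nhds_unique h1 h2
    -- -z is in the kernel N
    have hwN : (-z : X) ∈ N := by
      have hgr : ((-z : X), (0 : X)) ∈ A.graph := by
        apply hgraph_lim (fun j => uD (ψ j)) (-z) 0 hulim
        exact hAuDlim.comp hψmono.tendsto_atTop
      rcases A.mem_graph_iff.1 hgr with ⟨ee, hee1, hee2⟩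
      exact (hmemN _).2 ⟨ee, hee2, hee1⟩
    -- derive a contradiction from almost-minimality
    rcases (Metric.tendsto_atTop.1 hulim) (1 / 4) (by norm_num) with ⟨j₀, hj₀⟩
    set j : ℕ := max j₀ 5 with hjdef
    have hj1 : dist ((uD (ψ j) : X)) (-z) < 1 / 4 := hj₀ j (le_max_left _ _)
    have hcj : (4 : ℝ) < c (ψ j) := by
      have h5 : (5 : ℕ) ≤ ψ j := le_trans (le_max_right j₀ 5) (hψmono.le_apply)
      have : (5 : ℝ) ≤ (ψ j : ℝ) := by exact_mod_cast h5
      linarith [hφ2 (ψ j)]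
    have hkey := hP (φ (ψ j)) ((((c (ψ j)) : ℝ) : ℂ) • (-z)) (N.smul_mem _ hwN)
    have hsmul : ((d' (φ (ψ j)) : X)) = (((c (ψ j) : ℝ)) : ℂ) • ((uD (ψ j) : X)) := by
      rw [huval, smul_smul, ← Complex.ofReal_mul,
        mul_inv_cancel₀ (hcpos (ψ j)).ne', Complex.ofReal_one, one_smul]
    have hnorm1 : ‖((d' (φ (ψ j)) : X)) - (((c (ψ j) : ℝ)) : ℂ) • (-z)‖
        = c (ψ j) * ‖((uD (ψ j) : X)) - (-z)‖ := by
      rw [hsmul, ← smul_sub, norm_smul, Complex.norm_real, Real.norm_eq_abs,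
        abs_of_pos (hcpos (ψ j))]
    have hnd : ‖((d' (φ (ψ j)) : X))‖ = c (ψ j) := rfl
    rw [hnd, hnorm1] at hkey
    have hdist : ‖((uD (ψ j) : X)) - (-z)‖ < 1 / 4 := by
      rwa [← dist_eq_norm]
    have heps : (1 : ℝ) / (φ (ψ j) + 1) ≤ 1 := by
      rw [div_le_one (by positivity)]
      have : (0 : ℝ) ≤ (φ (ψ j) : ℝ) := Nat.cast_nonneg _
      linarith
    nlinarith [hcpos (ψ j), mul_le_mul_of_nonneg_left hdist.le (hcpos (ψ j)).le]
  -- bounded case: extract a convergent subsequence of K (d' n)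
  obtain ⟨M, hM⟩ := hbdd
  have hKcomp : IsCompact (closure ((fun x => K x) '' closedBall (0 : X) M)) := by
    have := hK.isCompact_closure_image_closedBall (f := (K : X →L[ℂ] X).toLinearMap)
    simpa using this M
  have hmemK : ∀ n, K ((d' n : X)) ∈ closure ((fun x => K x) '' closedBall (0 : X) M) := by
    intro n
    exact subset_closure ⟨(d' n : X), by simp [mem_closedBall, dist_eq_norm, hM n], rfl⟩
  obtain ⟨z, _, ψ, hψmono, hψlim⟩ := hKcomp.tendsto_subseq hmemK
  have hdlim : Filter.Tendsto (fun j => ((d' (ψ j) : X))) atTop (nhds (R y - z)) := by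
    have hrw : (fun j => ((d' (ψ j) : X)))
        = fun j => R (y' (ψ j)) - K ((d' (ψ j) : X)) := by
      funext j
      rw [← hAd' (ψ j)]
      exact hid (d' (ψ j))
    rw [hrw]
    have h1 : Filter.Tendsto (fun j => R (y' (ψ j))) atTop (nhds (R y)) :=
      (R.continuous.tendsto y).comp (hy'lim.comp hψmono.tendsto_atTop)
    exact h1.sub hψlim
  have hAlim : Filter.Tendsto (fun j => A (d' (ψ j))) atTop (nhds y) := by
    have : (fun j => A (d' (ψ j))) = fun j => y' (ψ j) := by
      funext j; exact hAd' (ψ j)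
    rw [this]
    exact hy'lim.comp hψmono.tendsto_atTop
  have hgr : ((R y - z : X), y) ∈ A.graph := hgraph_lim _ _ _ hdlim hAlim
  rcases A.mem_graph_iff.1 hgr with ⟨ee, hee1, hee2⟩
  exact ⟨ee, hee2⟩
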